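/- For the action of τ on the affine root lattice V of type Ã_{n−1}: for every 1 ≤ i ≤ n−2, τ^i(α_{n−1}) = iδ + α_{n−i−1} + α_{n−i} + ⋯ + α_{n−1}. In particular each τ^i(α_{n−1}), 1 ≤ i ≤ n−2, is a positive real affine root. -/

import Mathlib

/-! Statement 15: for the action of `τ` on the affine root lattice of type `Ã_{n-1}`:
for every `1 ≤ i ≤ n-2`, `τ^i(α_{n-1}) = iδ + α_{n-i-1} + α_{n-i} + ⋯ + α_{n-1}`;
in particular each `τ^i(α_{n-1})` is a positive real affine root. -/

/-- The affine root lattice `V = ℤ × (Fin n → ℤ)` of type `Ã_{n-1}`; the first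
coordinate records the coefficient of the basic imaginary root `δ`. -/
abbrev V (n : ℕ) : Type := ℤ × (Fin n → ℤ)

/-- The basic imaginary root `δ = (1, 0)`. -/
def deltaV (n : ℕ) : V n := (1, 0)

/-- The index preceding `i` cyclically (i.e. `i - 1 mod n`). -/
def prevIdx {n : ℕ} (i : Fin n) : Fin n := ⟨((i : ℕ) + (n - 1)) % n, Nat.mod_lt _ i.pos⟩

/-- The simple roots, indexed `0`-based by `Fin n`: writing `f_0, …, f_{n-1}` for the
standard basis of `Fin n → ℤ` (so `e_k = f_{k-1}` in the paper's `1`-based notation),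
`alphaV i = α_i = (0, e_i − e_{i+1}) = (0, f_{i-1} − f_i)` for `1 ≤ i ≤ n-1`, and
`alphaV 0 = α_0 = (1, e_n − e_1) = (1, f_{n-1} − f_0)`. -/
def alphaV {n : ℕ} (i : Fin n) : V n :=
  (if (i : ℕ) = 0 then 1 else 0, Pi.single (prevIdx i) 1 - Pi.single i 1)

/-- The pairing of `x ∈ V` with the coroot `α_i^∨`:
`⟨(r,v), α_i^∨⟩ = v_i − v_{i+1}` for `1 ≤ i ≤ n-1` and `⟨(r,v), α_0^∨⟩ = v_n − v_1`
(in the paper's `1`-based notation). -/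
def coroot {n : ℕ} (i : Fin n) (x : V n) : ℤ := x.2 (prevIdx i) - x.2 i

/-- The reflection `s_i : V → V`, `s_i(x) = x − ⟨x, α_i^∨⟩·α_i`. -/
def sV {n : ℕ} (i : Fin n) (x : V n) : V n := x - coroot i x • alphaV i

/-- `τ = s_{n-1}∘s_{n-2}∘⋯∘s_1∘s_0` acting on `V` (the `foldl` applies `s_0` first). -/
def tauV (n : ℕ) : V n → V n := fun x => (List.finRange n).foldl (fun y i => sV i y) x

/-- `κ = τ^{n-1}` acting on `V`. -/
def kappaV (n : ℕ) : V n → V n := (tauV n)^[n - 1]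

/-- A positive real affine root: an element of `V` of the form `(r, e_i − e_j)` with
`i ≠ j` and `r > 0`, or `(0, e_i − e_j)` with `i < j`. -/
def IsPosRealRoot {n : ℕ} (x : V n) : Prop :=
  ∃ i j : Fin n, x.2 = Pi.single i 1 - Pi.single j 1 ∧
    ((i ≠ j ∧ 0 < x.1) ∨ (i < j ∧ x.1 = 0))

lemma prev_mk_pos {n : ℕ} (a : ℕ) (h : a < n) (h1 : 1 ≤ a) :
    prevIdx (⟨a, h⟩ : Fin n) = ⟨a - 1, by omega⟩ := by
  apply Fin.ext
  show (a + (n - 1)) % n = a - 1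
  have hrw : a + (n - 1) = n + (a - 1) := by omega
  rw [hrw, Nat.add_mod_left, Nat.mod_eq_of_lt (by omega)]

lemma prev_zero {n : ℕ} (hn : 1 ≤ n) :
    prevIdx (⟨0, by omega⟩ : Fin n) = ⟨n - 1, Nat.sub_lt (by omega) Nat.one_pos⟩ := by
  apply Fin.ext
  show (0 + (n - 1)) % n = n - 1
  rw [Nat.zero_add, Nat.mod_eq_of_lt (by omega)]

lemma finRange_getElem? (n m : ℕ) (h : m < n) :
    (List.finRange n)[m]? = some ⟨m, h⟩ := by
  rw [List.getElem?_eq_getElem (by simpa using h)]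
  simp [List.getElem_finRange, Fin.ext_iff]

lemma sV_apply {n : ℕ} (i : Fin n) (r : ℤ) (v : Fin n → ℤ) :
    sV i (r, v) = (r - (v (prevIdx i) - v i) * (if (i : ℕ) = 0 then 1 else 0),
      fun j => v j - (v (prevIdx i) - v i) *
        ((Pi.single (prevIdx i) 1 : Fin n → ℤ) j - (Pi.single i 1 : Fin n → ℤ) j)) := rfl

set_option maxHeartbeats 2000000 in
lemma fold_take (n : ℕ) (hn : 3 ≤ n) (a : ℕ) (ha1 : 1 ≤ a) (ha2 : a ≤ n - 2) (r : ℤ) :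
    ∀ m, ∀ hm : m < n,
      ((List.finRange n).take (m + 1)).foldl (fun y i => sV i y)
        (r, Pi.single (⟨a, by omega⟩ : Fin n) 1 - Pi.single (⟨n - 1, Nat.sub_lt (by omega) Nat.one_pos⟩ : Fin n) 1)
      = (r + 1, Pi.single (⟨if m < a then a else a - 1,
            by split <;> omega⟩ : Fin n) 1 - Pi.single (⟨m, hm⟩ : Fin n) 1) := by
  intro m
  induction m with
  | zero =>
    intro hm
    rw [List.take_succ, List.take_zero, finRange_getElem? n 0 (by omega)]
    simp only [Option.toList_some, List.nil_append, List.foldl_cons, List.foldl_nil]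
    have hp : prevIdx (⟨0, by omega⟩ : Fin n) = ⟨n - 1, Nat.sub_lt (by omega) Nat.one_pos⟩ := prev_zero (by omega)
    rw [show ((r, Pi.single (⟨a, by omega⟩ : Fin n) 1
          - Pi.single (⟨n - 1, Nat.sub_lt (by omega) Nat.one_pos⟩ : Fin n) 1) : V n)
        = (r, (Pi.single (⟨a, by omega⟩ : Fin n) 1
          - Pi.single (⟨n - 1, Nat.sub_lt (by omega) Nat.one_pos⟩ : Fin n) 1 : Fin n → ℤ)) from rfl,
      sV_apply, Prod.mk.injEq]
    constructor
    · simp only [hp, Pi.sub_apply, Pi.single_apply, Fin.ext_iff, Fin.val_mk, if_true, if_false, eq_self_iff_true]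
      split_ifs <;> first | omega | exact (False.elim (by assumption))
    · funext j
      have hj := j.isLt
      simp only [hp, Pi.sub_apply, Pi.single_apply, Fin.ext_iff, Fin.val_mk, if_true, if_false, eq_self_iff_true]
      split_ifs <;> first | omega | exact (False.elim (by assumption))
  | succ m ih =>
    intro hm
    have hm' : m < n := by omega
    rw [List.take_succ, finRange_getElem? n (m + 1) hm, List.foldl_append, ih hm']
    simp only [Option.toList_some, List.foldl_cons, List.foldl_nil]
    have hp : prevIdx (⟨m + 1, hm⟩ : Fin n) = ⟨m, by omega⟩ :=
      prev_mk_pos (m + 1) hm (by omega)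
    rw [show ((r + 1, Pi.single (⟨if m < a then a else a - 1, by split <;> omega⟩ : Fin n) 1
          - Pi.single (⟨m, hm'⟩ : Fin n) 1) : V n)
        = (r + 1, (Pi.single (⟨if m < a then a else a - 1, by split <;> omega⟩ : Fin n) 1
          - Pi.single (⟨m, hm'⟩ : Fin n) 1 : Fin n → ℤ)) from rfl,
      sV_apply, Prod.mk.injEq]
    constructor
    · simp only [hp, Pi.sub_apply, Pi.single_apply, Fin.ext_iff, Fin.val_mk, if_true, if_false, eq_self_iff_true]
      split_ifs <;> first | omega | exact (False.elim (by assumption))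
    · funext j
      have hj := j.isLt
      simp only [hp, Pi.sub_apply, Pi.single_apply, Fin.ext_iff, Fin.val_mk, if_true, if_false, eq_self_iff_true]
      split_ifs <;> first | omega | exact (False.elim (by assumption))

lemma tau_special (n : ℕ) (hn : 3 ≤ n) (a : ℕ) (ha1 : 1 ≤ a) (ha2 : a ≤ n - 2) (r : ℤ) :
    tauV n (r, Pi.single (⟨a, by omega⟩ : Fin n) 1 - Pi.single (⟨n - 1, Nat.sub_lt (by omega) Nat.one_pos⟩ : Fin n) 1)
      = (r + 1, Pi.single (⟨a - 1, by omega⟩ : Fin n) 1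
          - Pi.single (⟨n - 1, Nat.sub_lt (by omega) Nat.one_pos⟩ : Fin n) 1) := by
  have htake : (List.finRange n).take (n - 1 + 1) = List.finRange n :=
    List.take_of_length_le (by simp; omega)
  have h := fold_take n hn a ha1 ha2 r (n - 1) (by omega)
  rw [htake] at h
  show (List.finRange n).foldl (fun y i => sV i y) _ = _
  rw [h, Prod.mk.injEq]
  refine ⟨rfl, ?_⟩
  funext j
  simp only [Pi.sub_apply, Pi.single_apply, Fin.ext_iff, Fin.val_mk, if_true, if_false, eq_self_iff_true]
  split_ifs <;> first | omega | exact (False.elim (by assumption))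

lemma iter_formula (n : ℕ) (hn : 3 ≤ n) :
    ∀ i, i ≤ n - 2 → (tauV n)^[i] (alphaV (⟨n - 1, Nat.sub_lt (by omega) Nat.one_pos⟩ : Fin n))
      = ((i : ℤ), Pi.single (⟨n - 2 - i, by omega⟩ : Fin n) 1
          - Pi.single (⟨n - 1, Nat.sub_lt (by omega) Nat.one_pos⟩ : Fin n) 1) := by
  intro i
  induction i with
  | zero =>
    intro _
    rw [Function.iterate_zero_apply]
    have hp : prevIdx (⟨n - 1, Nat.sub_lt (by omega) Nat.one_pos⟩ : Fin n) = ⟨n - 1 - 1, by omega⟩ :=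
      prev_mk_pos (n := n) (n - 1) (Nat.sub_lt (by omega) Nat.one_pos) (by omega)
    simp only [alphaV, hp, Nat.cast_zero]
    rw [Prod.mk.injEq]
    constructor
    · split_ifs <;> first | omega | exact (False.elim (by assumption))
    · funext j
      simp only [Pi.sub_apply, Pi.single_apply, Fin.ext_iff, Fin.val_mk, if_true, if_false, eq_self_iff_true]
      split_ifs <;> first | omega | exact (False.elim (by assumption))
  | succ i ih =>
    intro h
    rw [Function.iterate_succ_apply', ih (by omega),
      tau_special n hn (n - 2 - i) (by omega) (by omega) (i : ℤ)]
    rw [Prod.mk.injEq]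
    constructor
    · push_cast; ring
    · funext j
      simp only [Pi.sub_apply, Pi.single_apply, Fin.ext_iff, Fin.val_mk, if_true, if_false, eq_self_iff_true]
      split_ifs <;> first | omega | exact (False.elim (by assumption))

lemma sum_alpha (n : ℕ) (hn : 3 ≤ n) :
    ∀ i, i ≤ n - 2 →
      ∑ k ∈ Finset.univ.filter (fun k : Fin n => n - i - 1 ≤ (k : ℕ)), alphaV k
        = ((0 : ℤ), Pi.single (⟨n - 2 - i, by omega⟩ : Fin n) 1
            - Pi.single (⟨n - 1, Nat.sub_lt (by omega) Nat.one_pos⟩ : Fin n) 1) := by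
  intro i
  induction i with
  | zero =>
    intro _
    have hfil : Finset.univ.filter (fun k : Fin n => n - 0 - 1 ≤ (k : ℕ))
        = {(⟨n - 1, Nat.sub_lt (by omega) Nat.one_pos⟩ : Fin n)} := by
      ext k
      have hk := k.isLt
      simp only [Finset.mem_filter, Finset.mem_univ, true_and, Finset.mem_singleton,
        Fin.ext_iff, Fin.val_mk]
      omega
    rw [hfil, Finset.sum_singleton]
    have hp : prevIdx (⟨n - 1, Nat.sub_lt (by omega) Nat.one_pos⟩ : Fin n) = ⟨n - 1 - 1, by omega⟩ :=
      prev_mk_pos (n := n) (n - 1) (Nat.sub_lt (by omega) Nat.one_pos) (by omega)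
    simp only [alphaV, hp]
    rw [Prod.mk.injEq]
    constructor
    · split_ifs <;> first | omega | exact (False.elim (by assumption))
    · funext j
      simp only [Pi.sub_apply, Pi.single_apply, Fin.ext_iff, Fin.val_mk, if_true, if_false, eq_self_iff_true]
      split_ifs <;> first | omega | exact (False.elim (by assumption))
  | succ i ih =>
    intro h
    have hins : Finset.univ.filter (fun k : Fin n => n - (i + 1) - 1 ≤ (k : ℕ))
        = insert (⟨n - i - 2, by omega⟩ : Fin n)
            (Finset.univ.filter (fun k : Fin n => n - i - 1 ≤ (k : ℕ))) := by
      ext k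
      have hk := k.isLt
      simp only [Finset.mem_filter, Finset.mem_univ, true_and, Finset.mem_insert,
        Fin.ext_iff, Fin.val_mk]
      omega
    have hnotmem : (⟨n - i - 2, by omega⟩ : Fin n)
        ∉ Finset.univ.filter (fun k : Fin n => n - i - 1 ≤ (k : ℕ)) := by
      simp only [Finset.mem_filter, Finset.mem_univ, true_and, Fin.val_mk]
      omega
    rw [hins, Finset.sum_insert hnotmem, ih (by omega)]
    have hp : prevIdx (⟨n - i - 2, by omega⟩ : Fin n) = ⟨n - i - 2 - 1, by omega⟩ :=
      prev_mk_pos (n := n) (n - i - 2) (by omega) (by omega)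
    simp only [alphaV, hp, Prod.mk_add_mk]
    rw [Prod.mk.injEq]
    constructor
    · split_ifs <;> first | omega | exact (False.elim (by assumption))
    · funext j
      have hj := j.isLt
      simp only [Pi.add_apply, Pi.sub_apply, Pi.single_apply, Fin.ext_iff, Fin.val_mk,
        if_true, if_false, eq_self_iff_true]
      split_ifs <;> first | omega | exact (False.elim (by assumption))

/-- For `1 ≤ i ≤ n-2`,
`τ^i(α_{n-1}) = iδ + α_{n-i-1} + ⋯ + α_{n-1}`, a positive real affine root. -/
theorem stmt15 {n : ℕ} (hn : 3 ≤ n) (i : ℕ) (hi1 : 1 ≤ i) (hi2 : i ≤ n - 2) :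
    (tauV n)^[i] (alphaV (⟨n - 1, by omega⟩ : Fin n))
        = (i : ℤ) • deltaV n
          + ∑ k ∈ Finset.univ.filter (fun k : Fin n => n - i - 1 ≤ (k : ℕ)), alphaV k ∧
      IsPosRealRoot ((tauV n)^[i] (alphaV (⟨n - 1, by omega⟩ : Fin n))) := by
  have hit := iter_formula n hn i hi2
  constructor
  · rw [hit, sum_alpha n hn i hi2]
    rw [Prod.ext_iff]
    constructor
    · simp [deltaV]
    · simp [deltaV]
  · rw [hit]
    refine ⟨⟨n - 2 - i, by omega⟩, ⟨n - 1, by omega⟩, rfl, Or.inl ⟨?_, ?_⟩⟩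
    · simp only [ne_eq, Fin.ext_iff, Fin.val_mk]
      omega
    · show (0 : ℤ) < (i : ℕ)
      exact_mod_cast hi1
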